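/- For each t ∈ ℂ with t ≠ 0, set ψ_t = t⁻¹ · ((e₀ + t e₁)⊗(e₀ + t e₁)⊗(e₀ + t e₁) − e₀⊗e₀⊗e₀) ∈ ℂ² ⊗ ℂ² ⊗ ℂ². Then every ψ_t is SLOCC-equivalent to GHZ = e₀⊗e₀⊗e₀ + e₁⊗e₁⊗e₁, and ψ_t converges to W = e₁⊗e₀⊗e₀ + e₀⊗e₁⊗e₀ + e₀⊗e₀⊗e₁ as t → 0. (The W state is a limit of GHZ-class states: the tangential variety lies in the closure of the secant variety.) -/

import Mathlib

open TensorProduct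

noncomputable section

/-- The single-qubit space ℂ². -/
abbrev Qubit : Type := Fin 2 → ℂ

/-- The three-qubit Hilbert space ℂ² ⊗ ℂ² ⊗ ℂ². -/
abbrev ThreeQubit : Type := Qubit ⊗[ℂ] (Qubit ⊗[ℂ] Qubit)

/-- Standard basis vector e₀ of ℂ². -/
def e0 : Qubit := ![1, 0]

/-- Standard basis vector e₁ of ℂ². -/
def e1 : Qubit := ![0, 1]

/-- SLOCC equivalence: ψ and φ are related by invertible local linear maps. -/
def SLOCC (ψ φ : ThreeQubit) : Prop :=
  ∃ g₁ g₂ g₃ : Qubit ≃ₗ[ℂ] Qubit,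
    TensorProduct.map g₁.toLinearMap
      (TensorProduct.map g₂.toLinearMap g₃.toLinearMap) ψ = φ

def SepState : ThreeQubit := e0 ⊗ₜ[ℂ] (e0 ⊗ₜ[ℂ] e0)
def B1 : ThreeQubit := e0 ⊗ₜ[ℂ] (e0 ⊗ₜ[ℂ] e0) + e0 ⊗ₜ[ℂ] (e1 ⊗ₜ[ℂ] e1)
def B2 : ThreeQubit := e0 ⊗ₜ[ℂ] (e0 ⊗ₜ[ℂ] e0) + e1 ⊗ₜ[ℂ] (e0 ⊗ₜ[ℂ] e1)
def B3 : ThreeQubit := e0 ⊗ₜ[ℂ] (e0 ⊗ₜ[ℂ] e0) + e1 ⊗ₜ[ℂ] (e1 ⊗ₜ[ℂ] e0)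
def W : ThreeQubit := e1 ⊗ₜ[ℂ] (e0 ⊗ₜ[ℂ] e0) + e0 ⊗ₜ[ℂ] (e1 ⊗ₜ[ℂ] e0) + e0 ⊗ₜ[ℂ] (e0 ⊗ₜ[ℂ] e1)
def GHZ : ThreeQubit := e0 ⊗ₜ[ℂ] (e0 ⊗ₜ[ℂ] e0) + e1 ⊗ₜ[ℂ] (e1 ⊗ₜ[ℂ] e1)

/-- The standard basis e_i ⊗ e_j ⊗ e_k of the three-qubit space. -/
def stdBasis : Module.Basis (Fin 2 × Fin 2 × Fin 2) ℂ ThreeQubit :=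
  (Pi.basisFun ℂ (Fin 2)).tensorProduct
    ((Pi.basisFun ℂ (Fin 2)).tensorProduct (Pi.basisFun ℂ (Fin 2)))

/-- The standard (unique Hausdorff vector-space) topology on the finite-dimensional space
ℂ²⊗ℂ²⊗ℂ², induced from the coordinate norm. -/
instance : NormedAddCommGroup ThreeQubit :=
  NormedAddCommGroup.induced ThreeQubit (Fin 2 × Fin 2 × Fin 2 → ℂ)
    stdBasis.equivFun.toLinearMap stdBasis.equivFun.injective

instance : NormedSpace ℂ ThreeQubit :=
  NormedSpace.induced ℂ ThreeQubit (Fin 2 × Fin 2 × Fin 2 → ℂ) stdBasis.equivFun.toLinearMap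

/-- Auxiliary state X appearing at order t² in the expansion. -/
def Xaux : ThreeQubit :=
  e1 ⊗ₜ[ℂ] (e1 ⊗ₜ[ℂ] e0) + e1 ⊗ₜ[ℂ] (e0 ⊗ₜ[ℂ] e1) + e0 ⊗ₜ[ℂ] (e1 ⊗ₜ[ℂ] e1)

/-- Auxiliary state Y appearing at order t³ in the expansion. -/
def Yaux : ThreeQubit := e1 ⊗ₜ[ℂ] (e1 ⊗ₜ[ℂ] e1)

lemma expand_aux (t : ℂ) :
    (e0 + t • e1) ⊗ₜ[ℂ] ((e0 + t • e1) ⊗ₜ[ℂ] (e0 + t • e1)) - e0 ⊗ₜ[ℂ] (e0 ⊗ₜ[ℂ] e0)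
      = t • W + t ^ 2 • Xaux + t ^ 3 • Yaux := by
  simp only [W, Xaux, Yaux, tmul_add, add_tmul, tmul_smul, ← smul_tmul', smul_smul]
  module

/-- Linear equivalence from a pair of mutually inverse matrices. -/
def matEquiv (A B : Matrix (Fin 2) (Fin 2) ℂ) (hAB : A * B = 1) (hBA : B * A = 1) :
    Qubit ≃ₗ[ℂ] Qubit :=
  LinearEquiv.ofLinear (Matrix.toLin' A) (Matrix.toLin' B)
    (by rw [← Matrix.toLin'_mul, hAB, Matrix.toLin'_one])
    (by rw [← Matrix.toLin'_mul, hBA, Matrix.toLin'_one])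

lemma matEquiv_apply (A B : Matrix (Fin 2) (Fin 2) ℂ) (hAB hBA) (v : Qubit) :
    (matEquiv A B hAB hBA).toLinearMap v = A.mulVec v := by
  simp [matEquiv, Matrix.toLin'_apply]

lemma slocc_aux (t : ℂ) (ht : t ≠ 0) :
    SLOCC (t⁻¹ • ((e0 + t • e1) ⊗ₜ[ℂ] ((e0 + t • e1) ⊗ₜ[ℂ] (e0 + t • e1))
        - e0 ⊗ₜ[ℂ] (e0 ⊗ₜ[ℂ] e0))) GHZ := by
  have h1 : (!![0, 1; -t, 1] : Matrix (Fin 2) (Fin 2) ℂ) * !![t⁻¹, -t⁻¹; 1, 0] = 1 := by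
    ext i j; fin_cases i <;> fin_cases j <;>
      simp [Matrix.mul_apply, Fin.sum_univ_two] <;> field_simp <;> ring
  have h1' : (!![t⁻¹, -t⁻¹; 1, 0] : Matrix (Fin 2) (Fin 2) ℂ) * !![0, 1; -t, 1] = 1 := by
    ext i j; fin_cases i <;> fin_cases j <;>
      simp [Matrix.mul_apply, Fin.sum_univ_two] <;> field_simp
  have h2 : (!![0, t⁻¹; 1, -t⁻¹] : Matrix (Fin 2) (Fin 2) ℂ) * !![1, 1; t, 0] = 1 := by
    ext i j; fin_cases i <;> fin_cases j <;>
      simp [Matrix.mul_apply, Fin.sum_univ_two] <;> field_simp <;> ring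
  have h2' : (!![1, 1; t, 0] : Matrix (Fin 2) (Fin 2) ℂ) * !![0, t⁻¹; 1, -t⁻¹] = 1 := by
    ext i j; fin_cases i <;> fin_cases j <;>
      simp [Matrix.mul_apply, Fin.sum_univ_two] <;> field_simp
  refine ⟨matEquiv _ _ h1 h1', matEquiv _ _ h2 h2', matEquiv _ _ h2 h2', ?_⟩
  have ga1 : (matEquiv _ _ h1 h1').toLinearMap (e0 + t • e1) = t • e0 := by
    rw [matEquiv_apply]; funext i; fin_cases i <;>
      simp [Matrix.mulVec, dotProduct, e0, e1, Fin.sum_univ_two] <;> ring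
  have gb1 : (matEquiv _ _ h1 h1').toLinearMap e0 = (-t) • e1 := by
    rw [matEquiv_apply]; funext i; fin_cases i <;>
      simp [Matrix.mulVec, dotProduct, e0, e1, Fin.sum_univ_two]
  have ga2 : (matEquiv _ _ h2 h2').toLinearMap (e0 + t • e1) = e0 := by
    rw [matEquiv_apply]; funext i; fin_cases i <;>
      simp [Matrix.mulVec, dotProduct, e0, e1, Fin.sum_univ_two] <;> field_simp <;> ring
  have gb2 : (matEquiv _ _ h2 h2').toLinearMap e0 = e1 := by
    rw [matEquiv_apply]; funext i; fin_cases i <;>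
      simp [Matrix.mulVec, dotProduct, e0, e1, Fin.sum_univ_two]
  rw [map_smul, map_sub, TensorProduct.map_tmul, TensorProduct.map_tmul,
    TensorProduct.map_tmul, TensorProduct.map_tmul, ga1, gb1, ga2, gb2]
  rw [GHZ]
  simp only [← smul_tmul', tmul_smul, smul_smul, smul_sub]
  rw [inv_mul_cancel₀ ht, show t⁻¹ * -t = -1 by field_simp]
  module

set_option synthInstance.maxHeartbeats 1000000 in
set_option maxHeartbeats 1000000 in
open Filter in
/-- W is a limit of GHZ-class states: for t ≠ 0 the state
ψ_t = t⁻¹·((e₀+t e₁)⊗(e₀+t e₁)⊗(e₀+t e₁) − e₀⊗e₀⊗e₀) is in the GHZ class,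
and ψ_t → W as t → 0. -/
theorem W_limit_of_GHZ_states :
    (∀ t : ℂ, t ≠ 0 →
      SLOCC (t⁻¹ • ((e0 + t • e1) ⊗ₜ[ℂ] ((e0 + t • e1) ⊗ₜ[ℂ] (e0 + t • e1))
        - e0 ⊗ₜ[ℂ] (e0 ⊗ₜ[ℂ] e0))) GHZ) ∧
    Tendsto (fun t : ℂ =>
        t⁻¹ • ((e0 + t • e1) ⊗ₜ[ℂ] ((e0 + t • e1) ⊗ₜ[ℂ] (e0 + t • e1))
          - e0 ⊗ₜ[ℂ] (e0 ⊗ₜ[ℂ] e0)))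
      (nhdsWithin 0 {0}ᶜ) (nhds W) := by
  constructor
  · exact slocc_aux
  · have key : ∀ t : ℂ, t ≠ 0 →
        t⁻¹ • ((e0 + t • e1) ⊗ₜ[ℂ] ((e0 + t • e1) ⊗ₜ[ℂ] (e0 + t • e1))
          - e0 ⊗ₜ[ℂ] (e0 ⊗ₜ[ℂ] e0)) = W + t • Xaux + t ^ 2 • Yaux := by
      intro t ht
      rw [expand_aux, smul_add, smul_add, smul_smul, smul_smul, smul_smul,
        inv_mul_cancel₀ ht, one_smul,
        show t⁻¹ * t ^ 2 = t by field_simp,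
        show t⁻¹ * t ^ 3 = t ^ 2 by field_simp]
    have cont : Tendsto (fun t : ℂ => W + t • Xaux + t ^ 2 • Yaux) (nhds 0) (nhds W) := by
      have hc : Continuous fun t : ℂ => W + t • Xaux + t ^ 2 • Yaux := by
        apply Continuous.add (f := fun t : ℂ => W + t • Xaux) (g := fun t : ℂ => t ^ 2 • Yaux)
        · fun_prop
        · fun_prop
      have := hc.tendsto 0
      simpa using this
    refine Tendsto.congr' ?_ (cont.mono_left nhdsWithin_le_nhds)
    filter_upwards [self_mem_nhdsWithin] with t ht
    exact (key t ht).symm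

end
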